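/- Let Σ = {a,b} be a binary alphabet and T a string containing both characters. Suppose a is not maximal in T, a is maximal in aT, and there exists a string x maximal in T with x ≠ ε and x ≠ T such that ax is not maximal in T but ax is maximal in aT. Then the number of distinct characters c with ac a substring of aT is strictly less than 2. -/

import Mathlib

/-- 1-indexed ending positions of occurrences of `u` in `T`:
`i ∈ EndPos u T` iff `T[i-|u|+1..i] = u`. -/
def EndPos {α : Type*} (u T : List α) : Set ℕ :=
  {i | u.length ≤ i ∧ i ≤ T.length ∧ u <:+ T.take i}

/-- 0-indexed beginning positions of occurrences of `u` in `T`. -/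
def BegPos {α : Type*} (u T : List α) : Set ℕ :=
  {i | i + u.length ≤ T.length ∧ u <+: T.drop i}

/-- `u` is left-maximal in `T`: `u` is a prefix of `T`, or two distinct
characters immediately precede occurrences of `u` in `T`. -/
def LeftMaximal {α : Type*} (u T : List α) : Prop :=
  u <+: T ∨ ∃ c d : α, c ≠ d ∧ (c :: u) <:+: T ∧ (d :: u) <:+: T

/-- `u` is right-maximal in `T`: `u` is a suffix of `T`, or two distinct
characters immediately follow occurrences of `u` in `T`. -/
def RightMaximal {α : Type*} (u T : List α) : Prop :=
  u <:+ T ∨ ∃ c d : α, c ≠ d ∧ (u ++ [c]) <:+: T ∧ (u ++ [d]) <:+: T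

/-- `u` is maximal in `T` iff it is both left-maximal and right-maximal. -/
def MaximalSubstr {α : Type*} (u T : List α) : Prop :=
  LeftMaximal u T ∧ RightMaximal u T

-- aux: first occurrence of a is preceded by b (binary alphabet)
lemma lemC {α : Type*} {a b : α} (hSigma : ∀ c : α, c = a ∨ c = b) :
    ∀ T : List α, a ∈ T → [a] <+: T ∨ [b, a] <:+: T := by
  intro T
  induction T with
  | nil => simp
  | cons c t ih =>
    intro h
    rcases (hSigma c).imp Eq.symm Eq.symm with rfl | rfl
    · exact Or.inl ⟨t, rfl⟩
    · by_cases hac : a = b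
      · exact Or.inl ⟨t, by simp [hac]⟩
      · have ht : a ∈ t := by
          rcases List.mem_cons.mp h with h' | h'
          · exact absurd h' hac
          · exact h'
        rcases ih ht with ⟨s, rfl⟩ | hi
        · exact Or.inr ⟨[], s, rfl⟩
        · exact Or.inr (List.infix_cons hi)

-- aux: last occurrence of a is followed by b, if a is not a suffix
lemma lemD {α : Type*} {a b : α} (hSigma : ∀ c : α, c = a ∨ c = b) :
    ∀ T : List α, a ∈ T → ¬ [a] <:+ T → [a, b] <:+: T := by
  intro T
  induction T with
  | nil => simp
  | cons c t ih =>
    intro h hns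
    by_cases ht : a ∈ t
    · have hns' : ¬ [a] <:+ t := fun hs => hns (hs.trans (List.suffix_cons c t))
      exact List.infix_cons (ih ht hns')
    · have hca : c = a := by
        rcases List.mem_cons.mp h with h' | h'
        · exact h'.symm
        · exact absurd h' ht
      match t with
      | [] => exact absurd ⟨[], by simp [hca]⟩ hns
      | d :: t' =>
        rcases hSigma d with hd | hd
        · exact absurd (by rw [hd]; exact List.mem_cons_self) ht
        · exact ⟨[], t', by simp [hca, hd]⟩


theorem stmt6 {α : Type*} [DecidableEq α] (a b : α) (hab : a ≠ b)
    (hSigma : ∀ c : α, c = a ∨ c = b)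
    (T : List α) (haT : a ∈ T) (hbT : b ∈ T)
    (h1 : ¬ MaximalSubstr [a] T) (h2 : MaximalSubstr [a] (a :: T))
    (h3 : ∃ x : List α, MaximalSubstr x T ∧ x ≠ [] ∧ x ≠ T ∧
      ¬ MaximalSubstr (a :: x) T ∧ MaximalSubstr (a :: x) (a :: T)) :
    ((a :: T).toFinset.filter (fun c => [a, c] <:+: (a :: T))).card < 2 := by
  -- main claim: [a,a] is not an infix of a :: T
  have hmain : ¬ [a, a] <:+: (a :: T) := by
    match T, haT, hbT, h1, h2, h3 with
    | e :: T', haT, hbT, h1, h2, h3 =>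
      rcases (hSigma e).imp Eq.symm Eq.symm with rfl | rfl
      · -- Case I: T starts with a. Derive False.
        exfalso
        set T : List α := a :: T' with hTdef
        have hLa : LeftMaximal [a] T := Or.inl ⟨T', rfl⟩
        have hnR : ¬ RightMaximal [a] T := fun hR => h1 ⟨hLa, hR⟩
        have hns : ¬ [a] <:+ T := fun hs => hnR (Or.inl hs)
        have hab_inf : [a, b] <:+: T := lemD hSigma T haT hns
        have hnaa : ¬ [a, a] <:+: T := fun h =>
          hnR (Or.inr ⟨a, b, hab, h, hab_inf⟩)
        have key : ∀ v : List α, (a :: a :: v) <:+: (a :: T) → (a :: v) <+: T := by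
          intro v hv
          rcases List.infix_cons_iff.mp hv with hp | hi
          · exact (List.cons_prefix_cons.mp hp).2
          · exact absurd ((show [a, a] <+: a :: a :: v from ⟨v, rfl⟩).isInfix.trans hi) hnaa
        obtain ⟨x, hxM, hxne, hxnT, hnax, haxL, haxR⟩ := h3
        match x, hxne, hxM, hxnT, hnax, haxL, haxR with
        | f :: x', _, hxM, hxnT, hnax, haxL, haxR =>
        rcases (hSigma f).imp Eq.symm Eq.symm with rfl | rfl
        · -- x starts with a : ax = a a x'
          rcases haxR with hs | ⟨c, d, hcd, h₁, h₂⟩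
          · rcases List.suffix_cons_iff.mp hs with heq | hsuf
            · exact hxnT (by injection heq)
            · exact hnaa ((show [a, a] <+: a :: a :: x' from ⟨x', rfl⟩).isInfix.trans hsuf.isInfix)
          · have p₁ : (a :: (x' ++ [c])) <+: T := key (x' ++ [c]) (by simpa using h₁)
            have p₂ : (a :: (x' ++ [d])) <+: T := key (x' ++ [d]) (by simpa using h₂)
            have hl : (a :: (x' ++ [c])).length = (a :: (x' ++ [d])).length := by simp
            have := (List.prefix_of_prefix_length_le p₁ p₂ (le_of_eq hl)).eq_of_length hl
            apply hcd
            simpa using this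
        · -- x starts with b : ax = a b x'
          have hpax : (a :: b :: x') <+: T := by
            rcases haxL with hp | ⟨c, d, hcd, h₁, h₂⟩
            · have h' := (List.cons_prefix_cons.mp hp).2
              exact absurd (List.cons_prefix_cons.mp h').1 hab.symm
            · rcases (hSigma c).imp Eq.symm Eq.symm with rfl | rfl <;>
                rcases (hSigma d).imp Eq.symm Eq.symm with rfl | rfl
              · exact absurd rfl hcd
              · exact key (b :: x') h₁
              · exact key (b :: x') h₂
              · exact absurd rfl hcd
          have hLT : LeftMaximal (a :: b :: x') T := Or.inl hpax
          have hnRT : ¬ RightMaximal (a :: b :: x') T := fun h => hnax ⟨hLT, h⟩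
          rcases haxR with hs | ⟨c, d, hcd, h₁, h₂⟩
          · rcases List.suffix_cons_iff.mp hs with heq | hsuf
            · exact hxnT (by injection heq)
            · exact hnRT (Or.inl hsuf)
          · have notpre : ∀ g : α, ¬ ((a :: b :: x') ++ [g]) <+: (a :: T) := by
              intro g hp
              have h' := (List.cons_prefix_cons.mp hp).2
              exact hab ((List.cons_prefix_cons.mp h').1).symm
            have i₁ : ((a :: b :: x') ++ [c]) <:+: T :=
              (List.infix_cons_iff.mp h₁).resolve_left (notpre c)
            have i₂ : ((a :: b :: x') ++ [d]) <:+: T :=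
              (List.infix_cons_iff.mp h₂).resolve_left (notpre d)
            exact hnRT (Or.inr ⟨c, d, hcd, i₁, i₂⟩)
      · -- Case II: T starts with b.
        set T : List α := b :: T' with hTdef
        have haa2 : ¬ [a, a] <:+: T := by
          intro haa
          have hba : [b, a] <:+: T := by
            rcases lemC hSigma T haT with hp | hi
            · exact absurd (List.cons_prefix_cons.mp hp).1 hab
            · exact hi
          have hL : LeftMaximal [a] T := Or.inr ⟨a, b, hab, haa, hba⟩
          have hnR : ¬ RightMaximal [a] T := fun hR => h1 ⟨hL, hR⟩
          have hns : ¬ [a] <:+ T := fun hs => hnR (Or.inl hs)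
          have hab_inf : [a, b] <:+: T := lemD hSigma T haT hns
          exact hnR (Or.inr ⟨a, b, hab, haa, hab_inf⟩)
        intro h
        rcases List.infix_cons_iff.mp h with hp | hi
        · exact hab (List.cons_prefix_cons.mp (List.cons_prefix_cons.mp hp).2).1
        · exact haa2 hi
  have hsub : ((a :: T).toFinset.filter (fun c => [a, c] <:+: (a :: T))) ⊆ {b} := by
    intro c hc
    rcases Finset.mem_filter.mp hc with ⟨_, hinf⟩
    rcases (hSigma c).imp Eq.symm Eq.symm with rfl | rfl
    · exact absurd hinf hmain
    · exact Finset.mem_singleton_self b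
  calc ((a :: T).toFinset.filter (fun c => [a, c] <:+: (a :: T))).card
      ≤ ({b} : Finset α).card := Finset.card_le_card hsub
    _ = 1 := Finset.card_singleton b
    _ < 2 := by norm_num
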